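/- For every m > 0 and k ≥ 3, there exist unique α < ε₀ and b, l < ω such that m = A_α(k,b) + l, with α maximal satisfying A_α(k,0) ≤ m and b maximal satisfying A_α(k,b) ≤ m. -/

import Mathlib

/-- The predecessor of an ordinal notation: `some β` with `β + 1 = α` if `α` is
a successor, `none` otherwise. -/
def predO : ONote → Option ONote
  | .zero => none
  | .oadd .zero n .zero =>
      some (if h : (n : ℕ) = 1 then .zero
            else .oadd .zero ⟨(n : ℕ) - 1, by have h3 : 0 < (n : ℕ) := n.2; omega⟩ .zero)
  | .oadd _ _ .zero => none
  | .oadd e n a => (predO a).map (.oadd e n)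

/-- The standard fundamental sequences for ordinals below `ε₀` (in Cantor normal
form): `0[x] = 0`, `(β+1)[x] = β`, `(δ + ω^{γ+1})[x] = δ + ω^γ·x` and
`(δ + ω^λ)[x] = δ + ω^{λ[x]}` for limits `λ`. -/
def fundSeq : ONote → ℕ → ONote
  | .zero, _ => .zero
  | .oadd e n (.oadd e' n' a'), x => .oadd e n (fundSeq (.oadd e' n' a') x)
  | .oadd .zero n .zero, _ =>
      if h : (n : ℕ) = 1 then .zero
      else .oadd .zero ⟨(n : ℕ) - 1, by have h3 : 0 < (n : ℕ) := n.2; omega⟩ .zero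
  | .oadd (.oadd f m b) n .zero, x =>
      let tail : ONote :=
        match predO (.oadd f m b) with
        | some e' =>
            if h : x = 0 then .zero
            else .oadd e' ⟨x, Nat.pos_of_ne_zero h⟩ .zero
        | none => .oadd (fundSeq (.oadd f m b) x) 1 .zero
      if h : (n : ℕ) = 1 then tail
      else .oadd (.oadd f m b) ⟨(n : ℕ) - 1, by have h3 : 0 < (n : ℕ) := n.2; omega⟩ tail

mutual
/-- The graph of the extended Ackermann function: `EA k α b v` means
`A_α(k,b) = v`, where for limits `λ` one uses the iterated fundamental-sequence
indices `λ_{l,k,b}` (see `LamSeq`). -/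
inductive EA (k : ℕ) : ONote → ℕ → ℕ → Prop
  | zero (b : ℕ) : EA k .zero b (b + 1)
  | succZero {α β : ONote} {v : ℕ} :
      predO α = some β → IterEA k β k 0 v → EA k α 0 v
  | succStep {α β : ONote} {b w v : ℕ} :
      predO α = some β → EA k α b w → IterEA k β k w v → EA k α (b + 1) v
  | limZero {α μ : ONote} {v : ℕ} :
      α ≠ .zero → predO α = none →
      LamSeq k α 0 k μ → IterEA k μ k 0 v → EA k α 0 v
  | limStep {α μ : ONote} {b w v : ℕ} :
      α ≠ .zero → predO α = none →
      EA k α b w → LamSeq k α w k μ → IterEA k μ k w v → EA k α (b + 1) v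

/-- `IterEA k α n b v` means `(A_α(k,·))^n(b) = v`. -/
inductive IterEA (k : ℕ) : ONote → ℕ → ℕ → ℕ → Prop
  | zero (α : ONote) (b : ℕ) : IterEA k α 0 b b
  | succ {α : ONote} {n b v w : ℕ} :
      IterEA k α n b v → EA k α v w → IterEA k α (n + 1) b w

/-- `LamSeq k λ b l μ` means `μ = λ_{l,k,b}`, where `λ_{0,k,b} = λ[b]` and
`λ_{l+1,k,b} = λ[A_{λ_{l,k,b}}(k,b)]`. -/
inductive LamSeq (k : ℕ) : ONote → ℕ → ℕ → ONote → Prop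
  | zero (α : ONote) (b : ℕ) : LamSeq k α b 0 (fundSeq α b)
  | succ {α μ : ONote} {b l v : ℕ} :
      LamSeq k α b l μ → EA k μ b v → LamSeq k α b (l + 1) (fundSeq α v)
end

/-- A natural-number size of a notation. -/
def MyNorm : ONote → ℕ
  | .zero => 0
  | .oadd e n a => MyNorm e + (n : ℕ) + MyNorm a

namespace ONote
open Ordinal

theorem predO_repr : ∀ {α β : ONote}, predO α = some β → β.repr + 1 = α.repr
  | .zero, β, h => by simp [predO] at h
  | .oadd .zero n .zero, β, h => by
      simp only [predO, Option.some.injEq] at h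
      subst h
      split
      · next h1 => simp [h1]
      · next h1 =>
          have h2 : 0 < (n : ℕ) := n.2
          simp only [repr, PNat.mk_coe, Ordinal.opow_zero, one_mul, add_zero]
          have : ((n : ℕ) - 1 : ℕ) + (1:ℕ) = (n : ℕ) := by omega
          rw [← Nat.cast_one (R := Ordinal), ← Nat.cast_add, this]
  | .oadd e n (.oadd e' n' a'), β, h => by
      simp only [predO, Option.map_eq_some_iff] at h
      obtain ⟨β', hβ', rfl⟩ := h
      have h2 := predO_repr hβ'
      simp only [repr] at h2 ⊢
      rw [add_assoc, h2]
  | .oadd (.oadd f m b) n .zero, β, h => by simp [predO] at h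

theorem predO_norm : ∀ {α β : ONote}, predO α = some β → MyNorm β + 1 = MyNorm α
  | .zero, β, h => by simp [predO] at h
  | .oadd .zero n .zero, β, h => by
      simp only [predO, Option.some.injEq] at h
      subst h
      have h2 : 0 < (n : ℕ) := n.2
      split
      · next h1 => simp [MyNorm, h1]
      · next h1 => simp [MyNorm]; omega
  | .oadd e n (.oadd e' n' a'), β, h => by
      simp only [predO, Option.map_eq_some_iff] at h
      obtain ⟨β', hβ', rfl⟩ := h
      have h2 := predO_norm hβ'
      simp only [MyNorm] at h2 ⊢
      omega
  | .oadd (.oadd f m b) n .zero, β, h => by simp [predO] at h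

theorem predO_nf : ∀ {α β : ONote}, α.NF → predO α = some β → β.NF
  | .zero, β, _, h => by simp [predO] at h
  | .oadd .zero n .zero, β, hnf, h => by
      simp only [predO, Option.some.injEq] at h
      subst h
      split
      · exact NF.zero
      · exact NF.oadd NF.zero _ NFBelow.zero
  | .oadd e n (.oadd e' n' a'), β, hnf, h => by
      simp only [predO, Option.map_eq_some_iff] at h
      obtain ⟨β', hβ', rfl⟩ := h
      have hb : NF β' := predO_nf hnf.snd hβ'
      refine NF.oadd hnf.fst _ (NF.below_of_lt' ?_ hb)
      have h2 := predO_repr hβ'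
      calc β'.repr < β'.repr + 1 := lt_add_one _
        _ = repr (ONote.oadd e' n' a') := h2
        _ < Ordinal.omega0 ^ e.repr := hnf.snd'.repr_lt
  | .oadd (.oadd f m b) n .zero, β, _, h => by simp [predO] at h

theorem predO_lt {α β : ONote} (h : predO α = some β) : β.repr < α.repr := by
  have h2 := predO_repr h
  calc β.repr < β.repr + 1 := lt_add_one _
    _ = α.repr := h2
end ONote
namespace ONote
open Ordinal

theorem aux_lt {e : ONote} {t : Ordinal} (ht : t < omega0 ^ e.repr) {c n : ℕ} (hc : c < n) :
    omega0 ^ e.repr * c + t < omega0 ^ e.repr * n := by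
  have h1 : omega0 ^ e.repr * c + t < omega0 ^ e.repr * c + omega0 ^ e.repr :=
    (add_lt_add_iff_left _).2 ht
  have h2 : omega0 ^ e.repr * c + omega0 ^ e.repr = omega0 ^ e.repr * ((c + 1 : ℕ) : Ordinal) := by
    rw [Nat.cast_add, Nat.cast_one, mul_add, mul_one]
  rw [h2] at h1
  refine h1.trans_le (mul_le_mul_right ?_ _)
  exact_mod_cast Nat.cast_le.2 hc

theorem fundSeq_spec : ∀ {α : ONote} (x : ℕ), α.NF →
    NF (fundSeq α x) ∧ repr (fundSeq α x) ≤ repr α ∧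
      (predO α = none → α ≠ .zero → repr (fundSeq α x) < repr α)
  | .zero, x, _ => ⟨NF.zero, le_rfl, fun _ h => absurd rfl h⟩
  | .oadd .zero n .zero, x, hnf => by
      have h2 : 0 < (n : ℕ) := n.2
      refine ⟨?_, ?_, ?_⟩
      · simp only [fundSeq]
        split
        · exact NF.zero
        · exact NF.oadd NF.zero _ NFBelow.zero
      · simp only [fundSeq]
        split
        · simp
        · simp only [repr, PNat.mk_coe, Ordinal.opow_zero, one_mul, add_zero]
          exact_mod_cast Nat.cast_le.2 (Nat.sub_le _ 1)
      · intro hp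
        simp [predO] at hp
  | .oadd e n (.oadd e' n' a'), x, hnf => by
      obtain ⟨ih1, ih2, ih3⟩ := fundSeq_spec (α := .oadd e' n' a') x hnf.snd
      have hlt : repr (fundSeq (ONote.oadd e' n' a') x) < omega0 ^ e.repr :=
        lt_of_le_of_lt ih2 hnf.snd'.repr_lt
      refine ⟨by simp only [fundSeq]; exact NF.oadd hnf.fst _ (NF.below_of_lt' hlt ih1), ?_, ?_⟩
      · simp only [fundSeq, repr]
        exact (add_le_add_iff_left _).2 ih2
      · intro hp _
        simp only [predO, Option.map_eq_none_iff] at hp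
        simp only [fundSeq, repr]
        exact (add_lt_add_iff_left _).2 (ih3 hp (by simp))
  | .oadd (.oadd f m b) n .zero, x, hnf => by
      have hnfe : NF (ONote.oadd f m b) := hnf.fst
      have htail : NF (match predO (ONote.oadd f m b) with
            | some e' => if h : x = 0 then .zero
                else ONote.oadd e' ⟨x, Nat.pos_of_ne_zero h⟩ .zero
            | none => ONote.oadd (fundSeq (ONote.oadd f m b) x) 1 .zero : ONote) ∧
          repr (match predO (ONote.oadd f m b) with
            | some e' => if h : x = 0 then .zero
                else ONote.oadd e' ⟨x, Nat.pos_of_ne_zero h⟩ .zero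
            | none => ONote.oadd (fundSeq (ONote.oadd f m b) x) 1 .zero : ONote)
            < omega0 ^ (ONote.oadd f m b).repr := by
        cases hp : predO (ONote.oadd f m b) with
        | some e' =>
            simp only
            have hr := predO_repr hp
            have hnfe' : NF e' := predO_nf hnfe hp
            by_cases hx : x = 0
            · subst hx; simp only [dif_pos]
              exact ⟨NF.zero, by simpa using opow_pos _ omega0_pos⟩
            · rw [dif_neg hx]
              refine ⟨NF.oadd hnfe' _ NFBelow.zero, ?_⟩
              have h3 : repr (ONote.oadd e' ⟨x, Nat.pos_of_ne_zero hx⟩ .zero)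
                  = omega0 ^ e'.repr * x := by simp [ONote.repr]
              rw [h3, ← hr, opow_add, opow_one]
              exact mul_lt_mul_of_pos_left (nat_lt_omega0 x) (opow_pos _ omega0_pos)
        | none =>
            simp only
            obtain ⟨ih1, _, ih3⟩ := fundSeq_spec (α := .oadd f m b) x hnfe
            have hlt : repr (fundSeq (ONote.oadd f m b) x) < (ONote.oadd f m b).repr :=
              ih3 hp (by simp)
            refine ⟨NF.oadd ih1 _ NFBelow.zero, ?_⟩
            have h3 : repr (ONote.oadd (fundSeq (ONote.oadd f m b) x) 1 .zero)
                = omega0 ^ (fundSeq (ONote.oadd f m b) x).repr * 1 := by simp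
            rw [h3, mul_one]
            exact (opow_lt_opow_iff_right one_lt_omega0).2 hlt
      obtain ⟨htnf, htlt⟩ := htail
      have key : repr (fundSeq (ONote.oadd (ONote.oadd f m b) n .zero) x)
          < repr (ONote.oadd (ONote.oadd f m b) n .zero) := by
        simp only [fundSeq]
        split
        · exact htlt.trans_le (omega0_le_oadd _ _ _)
        · next h1 =>
            have h2 : 0 < (n : ℕ) := n.2
            have h3 : repr (ONote.oadd (ONote.oadd f m b)
                ⟨(n : ℕ) - 1, by omega⟩ (match predO (ONote.oadd f m b) with
                  | some e' => if h : x = 0 then .zero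
                      else ONote.oadd e' ⟨x, Nat.pos_of_ne_zero h⟩ .zero
                  | none => ONote.oadd (fundSeq (ONote.oadd f m b) x) 1 .zero : ONote))
                = omega0 ^ (ONote.oadd f m b).repr * (((n : ℕ) - 1 : ℕ) : Ordinal)
                  + repr (match predO (ONote.oadd f m b) with
                  | some e' => if h : x = 0 then .zero
                      else ONote.oadd e' ⟨x, Nat.pos_of_ne_zero h⟩ .zero
                  | none => ONote.oadd (fundSeq (ONote.oadd f m b) x) 1 .zero : ONote) := by
              simp [repr]
            rw [h3]
            have h4 : repr (ONote.oadd (ONote.oadd f m b) n .zero)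
                = omega0 ^ (ONote.oadd f m b).repr * ((n : ℕ) : Ordinal) := by simp
            rw [h4]
            exact aux_lt htlt (by omega)
      have hnfr : NF (fundSeq (ONote.oadd (ONote.oadd f m b) n .zero) x) := by
        simp only [fundSeq]
        split
        · exact htnf
        · exact NF.oadd hnfe _ (NF.below_of_lt' htlt htnf)
      exact ⟨hnfr, le_of_lt key, fun _ _ => key⟩

theorem fundSeq_nf {α : ONote} (x : ℕ) (h : α.NF) : (fundSeq α x).NF :=
  (fundSeq_spec x h).1

theorem fundSeq_lt {α : ONote} (x : ℕ) (h : α.NF) (h1 : predO α = none) (h2 : α ≠ .zero) :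
    (fundSeq α x).repr < α.repr :=
  (fundSeq_spec x h).2.2 h1 h2

end ONote
namespace ONote
open Ordinal

theorem fundSeq_ne_zero : ∀ {α : ONote} {x : ℕ}, predO α = none → α ≠ .zero → 1 ≤ x →
    fundSeq α x ≠ .zero
  | .zero, x, _, h2, _ => absurd rfl h2
  | .oadd .zero n .zero, x, h1, _, _ => by simp [predO] at h1
  | .oadd e n (.oadd e' n' a'), x, _, _, _ => by
      simp only [fundSeq]
      exact fun h => ONote.noConfusion h
  | .oadd (.oadd f m b) n .zero, x, h1, h2, hx => by
      simp only [fundSeq]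
      split
      · cases hp : predO (ONote.oadd f m b) with
        | some e' =>
            simp only [hp]
            rw [dif_neg (by omega : ¬ x = 0)]
            exact fun h => ONote.noConfusion h
        | none =>
            simp only [hp]
            exact fun h => ONote.noConfusion h
      · exact fun h => ONote.noConfusion h

theorem norm_fundSeq : ∀ {α : ONote} {x : ℕ}, predO α = none → α ≠ .zero → 2 ≤ x →
    MyNorm α ≤ MyNorm (fundSeq α x)
  | .zero, x, _, h2, _ => absurd rfl h2
  | .oadd .zero n .zero, x, h1, _, _ => by simp [predO] at h1
  | .oadd e n (.oadd e' n' a'), x, h1, _, hx => by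
      simp only [predO, Option.map_eq_none_iff] at h1
      have ih := norm_fundSeq (α := .oadd e' n' a') (x := x) h1 (by simp) hx
      simp only [MyNorm] at ih
      simp only [fundSeq, MyNorm]
      omega
  | .oadd (.oadd f m b) n .zero, x, h1, h2, hx => by
      have hNt : MyNorm (ONote.oadd f m b) + 1 ≤ MyNorm (match predO (ONote.oadd f m b) with
            | some e' => if h : x = 0 then .zero
                else ONote.oadd e' ⟨x, Nat.pos_of_ne_zero h⟩ .zero
            | none => ONote.oadd (fundSeq (ONote.oadd f m b) x) 1 .zero : ONote) := by
        cases hp : predO (ONote.oadd f m b) with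
        | some e' =>
            simp only
            rw [dif_neg (by omega : ¬ x = 0)]
            have := predO_norm hp
            simp only [MyNorm, PNat.mk_coe] at this ⊢
            omega
        | none =>
            simp only
            have ih := norm_fundSeq (α := .oadd f m b) (x := x) hp (by simp) hx
            simp only [MyNorm, PNat.one_coe] at ih ⊢
            omega
      have h3 : 0 < (n : ℕ) := n.2
      simp only [fundSeq]
      split
      · next hn => simp only [MyNorm] at hNt ⊢; omega
      · next hn => simp only [MyNorm, PNat.mk_coe] at hNt ⊢; omega

end ONote
section MutualInd
variable {k : ℕ}

theorem EA_mutual_ind (M1 : ONote → ℕ → ℕ → Prop) (M2 : ONote → ℕ → ℕ → ℕ → Prop)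
    (M3 : ONote → ℕ → ℕ → ONote → Prop)
    (hz : ∀ b, M1 .zero b (b + 1))
    (hsz : ∀ {α β : ONote} {v}, predO α = some β → IterEA k β k 0 v → M2 β k 0 v → M1 α 0 v)
    (hss : ∀ {α β : ONote} {b w v}, predO α = some β → EA k α b w → IterEA k β k w v →
      M1 α b w → M2 β k w v → M1 α (b + 1) v)
    (hlz : ∀ {α μ : ONote} {v}, α ≠ .zero → predO α = none → LamSeq k α 0 k μ →
      IterEA k μ k 0 v → M3 α 0 k μ → M2 μ k 0 v → M1 α 0 v)
    (hls : ∀ {α μ : ONote} {b w v}, α ≠ .zero → predO α = none → EA k α b w →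
      LamSeq k α w k μ → IterEA k μ k w v → M1 α b w → M3 α w k μ → M2 μ k w v → M1 α (b + 1) v)
    (hiz : ∀ (α : ONote) b, M2 α 0 b b)
    (his : ∀ {α : ONote} {n b v w}, IterEA k α n b v → EA k α v w → M2 α n b v → M1 α v w →
      M2 α (n + 1) b w)
    (hl0 : ∀ (α : ONote) b, M3 α b 0 (fundSeq α b))
    (hl1 : ∀ {α μ : ONote} {b l v}, LamSeq k α b l μ → EA k μ b v → M3 α b l μ → M1 μ b v →
      M3 α b (l + 1) (fundSeq α v)) :
    (∀ {α : ONote} {b v}, EA k α b v → M1 α b v) ∧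
    (∀ {α : ONote} {n b v}, IterEA k α n b v → M2 α n b v) ∧
    (∀ {α : ONote} {b l μ}, LamSeq k α b l μ → M3 α b l μ) := by
  refine ⟨fun h => ?_, fun h => ?_, fun h => ?_⟩
  · exact EA.rec (motive_1 := fun α b v _ => M1 α b v)
      (motive_2 := fun α n b v _ => M2 α n b v) (motive_3 := fun α b l μ _ => M3 α b l μ)
      (fun b => hz b) (fun hp hi ih => hsz hp hi ih)
      (fun hp he hi ih1 ih2 => hss hp he hi ih1 ih2)
      (fun hn hp hl hi ih1 ih2 => hlz hn hp hl hi ih1 ih2)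
      (fun hn hp he hl hi ih1 ih2 ih3 => hls hn hp he hl hi ih1 ih2 ih3)
      (fun α b => hiz α b) (fun hi he ih1 ih2 => his hi he ih1 ih2)
      (fun α b => hl0 α b) (fun hl he ih1 ih2 => hl1 hl he ih1 ih2) h
  · exact IterEA.rec (motive_1 := fun α b v _ => M1 α b v)
      (motive_2 := fun α n b v _ => M2 α n b v) (motive_3 := fun α b l μ _ => M3 α b l μ)
      (fun b => hz b) (fun hp hi ih => hsz hp hi ih)
      (fun hp he hi ih1 ih2 => hss hp he hi ih1 ih2)
      (fun hn hp hl hi ih1 ih2 => hlz hn hp hl hi ih1 ih2)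
      (fun hn hp he hl hi ih1 ih2 ih3 => hls hn hp he hl hi ih1 ih2 ih3)
      (fun α b => hiz α b) (fun hi he ih1 ih2 => his hi he ih1 ih2)
      (fun α b => hl0 α b) (fun hl he ih1 ih2 => hl1 hl he ih1 ih2) h
  · exact LamSeq.rec (motive_1 := fun α b v _ => M1 α b v)
      (motive_2 := fun α n b v _ => M2 α n b v) (motive_3 := fun α b l μ _ => M3 α b l μ)
      (fun b => hz b) (fun hp hi ih => hsz hp hi ih)
      (fun hp he hi ih1 ih2 => hss hp he hi ih1 ih2)
      (fun hn hp hl hi ih1 ih2 => hlz hn hp hl hi ih1 ih2)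
      (fun hn hp he hl hi ih1 ih2 ih3 => hls hn hp he hl hi ih1 ih2 ih3)
      (fun α b => hiz α b) (fun hi he ih1 ih2 => his hi he ih1 ih2)
      (fun α b => hl0 α b) (fun hl he ih1 ih2 => hl1 hl he ih1 ih2) h

end MutualInd
section Det
variable {k : ℕ}

theorem EA_det_all :
    (∀ {α : ONote} {b v}, EA k α b v → ∀ v', EA k α b v' → v = v') ∧
    (∀ {α : ONote} {n b v}, IterEA k α n b v → ∀ v', IterEA k α n b v' → v = v') ∧
    (∀ {α : ONote} {b l μ}, LamSeq k α b l μ → ∀ μ', LamSeq k α b l μ' → μ = μ') := by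
  refine EA_mutual_ind (fun α b v => ∀ v', EA k α b v' → v = v')
    (fun α n b v => ∀ v', IterEA k α n b v' → v = v')
    (fun α b l μ => ∀ μ', LamSeq k α b l μ' → μ = μ') ?_ ?_ ?_ ?_ ?_ ?_ ?_ ?_ ?_
  · intro b v' h'
    cases h' with
    | zero => rfl
    | succZero hp _ => simp [predO] at hp
    | limZero hne _ _ _ => exact absurd rfl hne
    | succStep hp _ _ => simp [predO] at hp
    | limStep hne _ _ _ _ => exact absurd rfl hne
  · intro α β v hp _ ih v' h'
    cases h' with
    | zero => simp [predO] at hp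
    | succZero hp' hit' =>
        rw [hp] at hp'; injection hp' with hβ; subst hβ; exact ih _ hit'
    | limZero _ hpn _ _ => rw [hp] at hpn; cases hpn
  · intro α β b w v hp _ _ ih1 ih2 v' h'
    cases h' with
    | zero => simp [predO] at hp
    | succStep hp' hprev' hit' =>
        rw [hp] at hp'; injection hp' with hβ; subst hβ
        have hw := ih1 _ hprev'; subst hw; exact ih2 _ hit'
    | limStep _ hpn _ _ _ => rw [hp] at hpn; cases hpn
  · intro α μ v hne hpn _ _ ih3 ih2 v' h'
    cases h' with
    | zero => exact absurd rfl hne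
    | succZero hp' _ => rw [hp'] at hpn; cases hpn
    | limZero _ _ hlam' hit' =>
        have hμ := ih3 _ hlam'; subst hμ; exact ih2 _ hit'
  · intro α μ b w v hne hpn _ _ _ ih1 ih3 ih2 v' h'
    cases h' with
    | zero => exact absurd rfl hne
    | succStep hp' _ _ => rw [hp'] at hpn; cases hpn
    | limStep _ _ hprev' hlam' hit' =>
        have hw := ih1 _ hprev'; subst hw
        have hμ := ih3 _ hlam'; subst hμ
        exact ih2 _ hit'
  · intro α b v' h'
    cases h'; rfl
  · intro α n b v w _ _ ih2 ih1 v' h'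
    cases h' with
    | succ hit' hea' => have hv := ih2 _ hit'; subst hv; exact ih1 _ hea'
  · intro α b μ' h'
    cases h'; rfl
  · intro α μ b l v _ _ ih3 ih1 μ' h'
    cases h' with
    | succ hl' hea' =>
        have hμ := ih3 _ hl'; subst hμ
        have hv := ih1 _ hea'; subst hv; rfl

theorem ea_det {α : ONote} {b v v' : ℕ} (h : EA k α b v) (h' : EA k α b v') : v = v' :=
  EA_det_all.1 h v' h'

theorem iter_det {α : ONote} {n b v v' : ℕ} (h : IterEA k α n b v) (h' : IterEA k α n b v') :
    v = v' :=
  EA_det_all.2.1 h v' h'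

theorem lam_det {α : ONote} {b l : ℕ} {μ μ' : ONote} (h : LamSeq k α b l μ)
    (h' : LamSeq k α b l μ') : μ = μ' :=
  EA_det_all.2.2 h μ' h'

end Det
theorem norm_pos {μ : ONote} (h : μ ≠ .zero) : 1 ≤ MyNorm μ := by
  cases μ with
  | zero => exact absurd rfl h
  | oadd e n a => have : 0 < (n : ℕ) := n.2; simp [MyNorm]; omega

section NormLB
variable {k : ℕ}

theorem EA_norm_all (hk : 3 ≤ k) :
    (∀ {α : ONote} {b v}, EA k α b v → α.NF → MyNorm α + b + 1 ≤ v) ∧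
    (∀ {α : ONote} {n b v}, IterEA k α n b v → α.NF →
      b ≤ v ∧ (1 ≤ n → MyNorm α + b + n ≤ v)) ∧
    (∀ {α : ONote} {b l μ}, LamSeq k α b l μ → α.NF → α ≠ .zero → predO α = none →
      μ.NF ∧ (1 ≤ l → μ ≠ .zero) ∧ (2 ≤ l → MyNorm α ≤ MyNorm μ)) := by
  refine EA_mutual_ind _ _ _ ?_ ?_ ?_ ?_ ?_ ?_ ?_ ?_ ?_
  · intro b _
    simp [MyNorm]
  · intro α β v hp _ ih2 hnf
    have hβ : β.NF := ONote.predO_nf hnf hp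
    have hn := ONote.predO_norm hp
    have h2 := (ih2 hβ).2 (by omega)
    omega
  · intro α β b w v hp _ _ ih1 ih2 hnf
    have hβ : β.NF := ONote.predO_nf hnf hp
    have h1 := ih1 hnf
    have h2 := (ih2 hβ).2 (by omega)
    omega
  · intro α μ v hne hpn hl _ ih3 ih2 hnf
    obtain ⟨hμnf, _, hμn⟩ := ih3 hnf hne hpn
    have h2 := (ih2 hμnf).2 (by omega)
    have h3 := hμn (by omega)
    omega
  · intro α μ b w v hne hpn _ _ _ ih1 ih3 ih2 hnf
    have h1 := ih1 hnf
    obtain ⟨hμnf, _, hμn⟩ := ih3 hnf hne hpn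
    have h2 := (ih2 hμnf).2 (by omega)
    have h3 := hμn (by omega)
    omega
  · intro α b _
    exact ⟨le_rfl, by omega⟩
  · intro α n b v w _ _ ih2 ih1 hnf
    obtain ⟨h1, h2⟩ := ih2 hnf
    have h3 := ih1 hnf
    constructor
    · omega
    · intro _
      rcases Nat.eq_zero_or_pos n with hn | hn
      · omega
      · have := h2 hn; omega
  · intro α b hnf _ hpn
    exact ⟨ONote.fundSeq_nf b hnf, by omega, by omega⟩
  · intro α μ b l v hl he ih3 ih1 hnf hne hpn
    obtain ⟨hμnf, hμne, hμn⟩ := ih3 hnf hne hpn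
    have hv : MyNorm μ + b + 1 ≤ v := ih1 hμnf
    refine ⟨ONote.fundSeq_nf v hnf, ?_, ?_⟩
    · intro _
      exact ONote.fundSeq_ne_zero hpn hne (by omega)
    · intro hll
      have hμ0 : μ ≠ .zero := hμne (by omega)
      have := norm_pos hμ0
      exact ONote.norm_fundSeq hpn hne (by omega)

theorem ea_norm_lb (hk : 3 ≤ k) {α : ONote} {b v : ℕ} (h : EA k α b v) (hnf : α.NF) :
    MyNorm α + b + 1 ≤ v :=
  (EA_norm_all hk).1 h hnf

theorem ea_lb (hk : 3 ≤ k) {α : ONote} {b v : ℕ} (h : EA k α b v) (hnf : α.NF) : b < v := by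
  have := ea_norm_lb hk h hnf; omega

theorem iter_lb (hk : 3 ≤ k) {α : ONote} {n b v : ℕ} (h : IterEA k α n b v) (hnf : α.NF) :
    b ≤ v ∧ (1 ≤ n → MyNorm α + b + n ≤ v) :=
  (EA_norm_all hk).2.1 h hnf

theorem lam_nf (hk : 3 ≤ k) {α μ : ONote} {b l : ℕ} (h : LamSeq k α b l μ) (hnf : α.NF)
    (hne : α ≠ .zero) (hpn : predO α = none) : μ.NF :=
  ((EA_norm_all hk).2.2 h hnf hne hpn).1

end NormLB
section Total
variable {k : ℕ}

theorem iter_total {β : ONote} (htot : ∀ b, ∃ v, EA k β b v) :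
    ∀ n b, ∃ v, IterEA k β n b v := by
  intro n b
  induction n with
  | zero => exact ⟨b, .zero β b⟩
  | succ n ih =>
      obtain ⟨v, hv⟩ := ih
      obtain ⟨w, hw⟩ := htot v
      exact ⟨w, .succ hv hw⟩

theorem lam_total {α : ONote} (hnf : α.NF) (hne : α ≠ .zero) (hpn : predO α = none)
    (IH : ∀ β : ONote, β.repr < α.repr → β.NF → ∀ b, ∃ v, EA k β b v) (b : ℕ) :
    ∀ l, ∃ μ : ONote, LamSeq k α b l μ ∧ μ.NF ∧ μ.repr < α.repr := by
  intro l
  induction l with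
  | zero =>
      exact ⟨fundSeq α b, .zero α b, ONote.fundSeq_nf b hnf, ONote.fundSeq_lt b hnf hpn hne⟩
  | succ l ih =>
      obtain ⟨μ, hμ, hμnf, hμlt⟩ := ih
      obtain ⟨v, hv⟩ := IH μ hμlt hμnf b
      exact ⟨fundSeq α v, .succ hμ hv, ONote.fundSeq_nf v hnf, ONote.fundSeq_lt v hnf hpn hne⟩

theorem ea_total_aux : ∀ o : Ordinal, ∀ α : ONote, α.repr = o → α.NF → ∀ b, ∃ v, EA k α b v := by
  intro o
  induction o using Ordinal.induction with
  | h o IH0 =>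
  intro α ho hnf b
  subst ho
  have IH : ∀ β : ONote, β.repr < α.repr → β.NF → ∀ b, ∃ v, EA k β b v :=
    fun β hlt hβ b => IH0 β.repr hlt β rfl hβ b
  cases hα : α with
  | zero => exact ⟨b + 1, .zero b⟩
  | oadd e n a =>
  subst hα
  cases hp : predO (ONote.oadd e n a) with
  | some β =>
      have hβnf : β.NF := ONote.predO_nf hnf hp
      have hβlt := ONote.predO_lt hp
      have htot : ∀ b, ∃ v, EA k β b v := IH β hβlt hβnf
      induction b with
      | zero =>
          obtain ⟨v, hv⟩ := iter_total htot k 0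
          exact ⟨v, .succZero hp hv⟩
      | succ b ihb =>
          obtain ⟨w, hw⟩ := ihb
          obtain ⟨v, hv⟩ := iter_total htot k w
          exact ⟨v, .succStep hp hw hv⟩
  | none =>
      have hne : (ONote.oadd e n a) ≠ .zero := fun h => ONote.noConfusion h
      induction b with
      | zero =>
          obtain ⟨μ, hμ, hμnf, hμlt⟩ := lam_total hnf hne hp IH 0 k
          obtain ⟨v, hv⟩ := iter_total (IH μ hμlt hμnf) k 0
          exact ⟨v, .limZero hne hp hμ hv⟩
      | succ b ihb =>
          obtain ⟨w, hw⟩ := ihb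
          obtain ⟨μ, hμ, hμnf, hμlt⟩ := lam_total hnf hne hp IH w k
          obtain ⟨v, hv⟩ := iter_total (IH μ hμlt hμnf) k w
          exact ⟨v, .limStep hne hp hw hμ hv⟩

theorem ea_total {α : ONote} (hnf : α.NF) (b : ℕ) : ∃ v, EA k α b v :=
  ea_total_aux α.repr α rfl hnf b

end Total
section Mono
variable {k : ℕ}

theorem ea_succ_inv (hk : 3 ≤ k) {α : ONote} {b v : ℕ} (hnf : α.NF) (h : EA k α (b + 1) v) :
    ∃ w, EA k α b w ∧ w < v := by
  cases h with
  | zero => exact ⟨b + 1, .zero b, by omega⟩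
  | succStep hp hprev hit =>
      have hβ := ONote.predO_nf hnf hp
      have := (iter_lb hk hit hβ).2 (by omega)
      exact ⟨_, hprev, by omega⟩
  | limStep hne hpn hprev hlam hit =>
      have hμ := lam_nf hk hlam hnf hne hpn
      have := (iter_lb hk hit hμ).2 (by omega)
      exact ⟨_, hprev, by omega⟩

theorem ea_mono_aux (hk : 3 ≤ k) {α : ONote} (hnf : α.NF) :
    ∀ (d : ℕ) {b w w'}, EA k α b w → EA k α (b + d + 1) w' → w < w' := by
  intro d
  induction d with
  | zero =>
      intro b w w' h h'
      obtain ⟨w'', h'', hlt⟩ := ea_succ_inv hk hnf (by simpa using h')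
      have := ea_det h h''
      omega
  | succ d ih =>
      intro b w w' h h'
      have h2 : EA k α ((b + d + 1) + 1) w' := by
        have : b + (d + 1) + 1 = (b + d + 1) + 1 := by omega
        rwa [this] at h'
      obtain ⟨w'', h'', hlt⟩ := ea_succ_inv hk hnf h2
      exact lt_trans (ih h h'') hlt

theorem ea_strict_mono (hk : 3 ≤ k) {α : ONote} (hnf : α.NF) {b b' w w' : ℕ} (hb : b < b')
    (h : EA k α b w) (h' : EA k α b' w') : w < w' := by
  have h2 : EA k α (b + (b' - b - 1) + 1) w' := by
    have : b + (b' - b - 1) + 1 = b' := by omega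
    rwa [this]
  exact ea_mono_aux hk hnf _ h h2

end Mono
section Fin

theorem norm_finite : ∀ n : ℕ, {β : ONote | MyNorm β ≤ n}.Finite := by
  intro n
  induction n with
  | zero =>
      refine Set.Finite.subset (Set.finite_singleton .zero) ?_
      intro β hβ
      simp only [Set.mem_setOf_eq, Nat.le_zero] at hβ
      by_contra hne
      have := norm_pos (by simpa using hne)
      omega
  | succ n ih =>
      refine Set.Finite.subset
        (Set.Finite.insert .zero
          (Set.Finite.image (fun p : ONote × ℕ × ONote =>
            if h : 0 < p.2.1 then ONote.oadd p.1 ⟨p.2.1, h⟩ p.2.2 else .zero)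
            (((ih.prod ((Set.finite_Iic (n+1)).prod ih))))))
        ?_
      intro β hβ
      simp only [Set.mem_setOf_eq] at hβ
      cases β with
      | zero => exact Set.mem_insert _ _
      | oadd e c a =>
          refine Set.mem_insert_of_mem _ ?_
          refine ⟨⟨e, (c : ℕ), a⟩, ?_, ?_⟩
          · have hc : 0 < (c : ℕ) := c.2
            simp only [MyNorm] at hβ
            refine ⟨?_, ?_, ?_⟩ <;> simp only [Set.mem_setOf_eq, Set.mem_Iic] <;> omega
          · have hc : 0 < (c : ℕ) := c.2
            simp only [dif_pos hc]
            congr 1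

theorem nf_repr_inj {a b : ONote} (ha : a.NF) (hb : b.NF) (h : a.repr = b.repr) : a = b := by
  haveI := ha; haveI := hb
  have hc := ONote.cmp_compares a b
  cases hcmp : ONote.cmp a b with
  | lt => rw [hcmp] at hc; exact absurd (ONote.lt_def.1 hc) (by rw [h]; exact lt_irrefl _)
  | eq => exact ONote.eq_of_cmp_eq hcmp
  | gt => rw [hcmp] at hc; exact absurd (ONote.lt_def.1 hc) (by rw [h]; exact lt_irrefl _)

end Fin
open Classical in
/-- Every `m > 0` has a unique normal form `m = A_α(k,b) + l` with `α < ε₀`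
maximal such that `A_α(k,0) ≤ m` and `b` maximal such that `A_α(k,b) ≤ m`. -/
theorem ea_normal_form_exists_unique (k m : ℕ) (hk : 3 ≤ k) (hm : 0 < m) :
    ∃! t : ONote × ℕ × ℕ, t.1.NF ∧
      (∃ v, EA k t.1 t.2.1 v ∧ m = v + t.2.2) ∧
      (∃ v0, EA k t.1 0 v0 ∧ v0 ≤ m) ∧
      (∀ (β : ONote) (w : ℕ), β.NF → EA k β 0 w → w ≤ m →
        β.repr ≤ t.1.repr) ∧
      (∀ b' w : ℕ, EA k t.1 b' w → w ≤ m → b' ≤ t.2.1) := by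
  -- the set of candidate ordinals
  set S : Set ONote := {β : ONote | β.NF ∧ ∃ w, EA k β 0 w ∧ w ≤ m} with hS
  have hfin : S.Finite := by
    refine Set.Finite.subset (norm_finite m) ?_
    rintro β ⟨hβnf, w, hw, hwm⟩
    have := ea_norm_lb hk hw hβnf
    simp only [Set.mem_setOf_eq]
    omega
  have hne : S.Nonempty := ⟨.zero, ONote.NF.zero, 1, .zero 0, hm⟩
  obtain ⟨α, hαS, hαmax⟩ := Set.Finite.exists_maximalFor ONote.repr S hfin hne
  obtain ⟨hαnf, v0, hv0, hv0m⟩ := hαS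
  have hmax : ∀ (β : ONote) (w : ℕ), β.NF → EA k β 0 w → w ≤ m → β.repr ≤ α.repr := by
    intro β w hβnf hβ hwm
    rcases le_or_gt β.repr α.repr with h | h
    · exact h
    · exact hαmax ⟨hβnf, w, hβ, hwm⟩ (le_of_lt h)
  -- choose b maximal
  set b := Nat.findGreatest (fun b => ∃ w, EA k α b w ∧ w ≤ m) m with hb
  have hPb : ∃ w, EA k α b w ∧ w ≤ m :=
    Nat.findGreatest_spec (P := fun b => ∃ w, EA k α b w ∧ w ≤ m) (Nat.zero_le m) ⟨v0, hv0, hv0m⟩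
  obtain ⟨v, hv, hvm⟩ := hPb
  have hbmax : ∀ b' w : ℕ, EA k α b' w → w ≤ m → b' ≤ b := by
    intro b' w hw hwm
    by_contra hgt
    push_neg at hgt
    rcases le_or_gt b' m with hbm | hbm
    · exact Nat.findGreatest_is_greatest hgt hbm ⟨w, hw, hwm⟩
    · have := ea_lb hk hw hαnf
      omega
  refine ⟨(α, b, m - v), ⟨hαnf, ⟨v, hv, by show m = v + (m - v); omega⟩, ⟨v0, hv0, hv0m⟩, hmax, hbmax⟩, ?_⟩
  rintro ⟨α', b', l'⟩ ⟨hnf', ⟨v', hv', hmv'⟩, ⟨w0', hw0', hw0m'⟩, hmax', hbmax'⟩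
  replace hmv' : m = v' + l' := hmv'
  -- show α' = α
  have h1 : α'.repr ≤ α.repr := hmax α' w0' hnf' hw0' hw0m'
  have h2 : α.repr ≤ α'.repr := hmax' α v0 hαnf hv0 hv0m
  have hαeq : α' = α := nf_repr_inj hnf' hαnf (le_antisymm h1 h2)
  subst hαeq
  -- show b' = b
  have hv'm : v' ≤ m := by omega
  have hb1 : b' ≤ b := hbmax b' v' hv' hv'm
  have hb2 : b ≤ b' := hbmax' b v hv hvm
  have hbeq : b' = b := le_antisymm hb1 hb2
  subst hbeq
  have hveq : v' = v := ea_det hv' hv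
  subst hveq
  have hl : l' = m - v' := by omega
  rw [hl]
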